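/- Let G be the 4×4 real matrix with rows (2, 0, 1, −1), (0, 2, 1, φ−1), (1, 1, 2, −1), (−1, φ−1, −1, 2) (the Gram matrix of the icosian basis under the polar norm pairing). Then G is invertible and every entry of G⁻¹ lies in ℤ + ℤφ ⊂ ℝ. -/

import Mathlib

noncomputable def φ : ℝ := (1 + Real.sqrt 5) / 2

/-- The golden integer ring `ℤ + ℤφ` as a subset of `ℝ`. -/
def Zφ : Set ℝ := {x | ∃ a b : ℤ, x = (a : ℝ) + (b : ℝ) * φ}

/-- The Gram matrix of the icosian basis under the polar norm pairing. -/
noncomputable def icosianGram : Matrix (Fin 4) (Fin 4) ℝ :=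
  !![2, 0, 1, -1; 0, 2, 1, φ - 1; 1, 1, 2, -1; -1, φ - 1, -1, 2]

lemma phi_sq : φ * φ = φ + 1 := by
  have h : Real.sqrt 5 * Real.sqrt 5 = 5 :=
    Real.mul_self_sqrt (by norm_num)
  unfold φ; nlinarith [h]

noncomputable def icosianInv : Matrix (Fin 4) (Fin 4) ℝ :=
  !![4 - 2*φ, 5 - 3*φ, -2 + φ, 5 - 3*φ;
     5 - 3*φ, 8 - 4*φ, -3 + φ, 7 - 5*φ;
     -2 + φ, -3 + φ, 2, -2 + 2*φ;
     5 - 3*φ, 7 - 5*φ, -2 + 2*φ, 8 - 4*φ]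

lemma gram_mul_inv : icosianGram * icosianInv = 1 := by
  have h := phi_sq
  ext i j
  fin_cases i <;> fin_cases j <;>
    simp [icosianGram, icosianInv, Matrix.mul_apply, Fin.sum_univ_four,
      Matrix.one_apply] <;>
    nlinarith [h]

/-- The icosian Gram matrix is invertible and every entry of its inverse lies in `ℤ + ℤφ`. -/
theorem icosian_gram_inverse_golden :
    IsUnit icosianGram ∧ ∀ r s : Fin 4, icosianGram⁻¹ r s ∈ Zφ := by
  have hinv : icosianGram⁻¹ = icosianInv := Matrix.inv_eq_right_inv gram_mul_inv
  constructor
  · exact (Matrix.isUnit_iff_isUnit_det _).mpr (Matrix.isUnit_det_of_right_inverse gram_mul_inv)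
  · intro r s
    rw [hinv]
    fin_cases r <;> fin_cases s <;> simp [icosianInv, Zφ]
    · exact ⟨4, -2, by push_cast; ring⟩
    · exact ⟨5, -3, by push_cast; ring⟩
    · exact ⟨-2, 1, by push_cast; ring⟩
    · exact ⟨5, -3, by push_cast; ring⟩
    · exact ⟨5, -3, by push_cast; ring⟩
    · exact ⟨8, -4, by push_cast; ring⟩
    · exact ⟨-3, 1, by push_cast; ring⟩
    · exact ⟨7, -5, by push_cast; ring⟩
    · exact ⟨-2, 1, by push_cast; ring⟩
    · exact ⟨-3, 1, by push_cast; ring⟩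
    · exact ⟨2, 0, by push_cast; ring⟩
    · exact ⟨-2, 2, by push_cast; ring⟩
    · exact ⟨5, -3, by push_cast; ring⟩
    · exact ⟨7, -5, by push_cast; ring⟩
    · exact ⟨-2, 2, by push_cast; ring⟩
    · exact ⟨8, -4, by push_cast; ring⟩
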